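/- Let R^1,...,R^k be binary random variables with Pr[R^i=1]=p_i and p_1 ≤ ... ≤ p_k. A coupling (T^1,...,T^k) of R^1,...,R^k is multimaximal if and only if for each i = 1,...,k-1, the pair (T^i, T^{i+1}) is a maximal coupling of (R^i, R^{i+1}), i.e., Pr[T^i = T^{i+1}] = 1 - |p_{i+1} - p_i|. -/

import Mathlib

open Finset

/-- Threshold vector in `{1,2}^k` (`0` encodes the value "1", `1` encodes "2"):
`l` leading 2's followed by 1's. -/
def vecT (k l : ℕ) : Fin k → Fin 2 := fun i => if (i : ℕ) < l then 1 else 0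

/-- The "staircase" distribution on `{1,2}^k` determined by sorted marginal
probabilities `p 0 ≤ … ≤ p (k-1)`. -/
noncomputable def stair (k : ℕ) (p : Fin k → ℝ) : (Fin k → Fin 2) → ℝ :=
  fun x => ∑ l : Fin (k + 1),
    if x = vecT k (l : ℕ) then
      (if h : (l : ℕ) < k then p ⟨(l : ℕ), h⟩ else 1)
        - (if h : (l : ℕ) ≠ 0 then p ⟨(l : ℕ) - 1, by have := l.isLt; omega⟩ else 0)
    else 0

/-- The probability, under the joint distribution `T` on `{1,2}^k`, that all
coordinates in `I` equal `v`. -/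
noncomputable def prAll (k : ℕ) (T : (Fin k → Fin 2) → ℝ) (I : Finset (Fin k))
    (v : Fin 2) : ℝ :=
  ∑ x : Fin k → Fin 2, if ∀ i ∈ I, x i = v then T x else 0

/-- `T` is a multimaximal coupling of binary random variables with 1-probabilities
`p i`: it is a probability distribution and, for every nonempty index set `I`, the
probability that all coordinates in `I` equal "1" is `min_{i∈I} p i` and the
probability that all equal "2" is `min_{i∈I} (1 - p i)` (the maximal values
attainable by any coupling). Taking `I` a singleton gives the marginal conditions. -/
def IsMultimax (k : ℕ) (p : Fin k → ℝ) (T : (Fin k → Fin 2) → ℝ) : Prop :=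
  (∀ x, 0 ≤ T x) ∧ (∑ x : Fin k → Fin 2, T x = 1) ∧
    ∀ I : Finset (Fin k), ∀ hI : I.Nonempty,
      prAll k T I 0 = I.inf' hI p ∧ prAll k T I 1 = I.inf' hI (fun i => 1 - p i)

/-- with `p` sorted, a coupling `T` of the binary variables is
multimaximal iff each adjacent pair `(T^i, T^{i+1})` is a maximal coupling, i.e.
`Pr[T^i = T^{i+1}] = 1 - |p (i+1) - p i|`. -/
theorem stmt5 (k : ℕ) (p : Fin k → ℝ) (hmono : Monotone p)
    (h0 : ∀ i, 0 ≤ p i) (h1 : ∀ i, p i ≤ 1)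
    (T : (Fin k → Fin 2) → ℝ)
    (hnn : ∀ x, 0 ≤ T x) (hsum : ∑ x : Fin k → Fin 2, T x = 1)
    (hmarg : ∀ i, prAll k T {i} 0 = p i) :
    IsMultimax k p T ↔
      ∀ i : Fin k, ∀ h : (i : ℕ) + 1 < k,
        (∑ x : Fin k → Fin 2, if x i = x ⟨(i : ℕ) + 1, h⟩ then T x else 0)
          = 1 - |p ⟨(i : ℕ) + 1, h⟩ - p i| := by
  classical
  have fin2 : ∀ a : Fin 2, a = 0 ∨ a = 1 := by decide
  have hm0 : ∀ i : Fin k, (∑ x : Fin k → Fin 2, if x i = 0 then T x else 0) = p i := by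
    intro i
    have := hmarg i
    simpa [prAll] using this
  have hm1 : ∀ i : Fin k, (∑ x : Fin k → Fin 2, if x i = 1 then T x else 0) = 1 - p i := by
    intro i
    have hsplit : (∑ x : Fin k → Fin 2, if x i = 0 then T x else 0)
        + (∑ x : Fin k → Fin 2, if x i = 1 then T x else 0) = 1 := by
      rw [← Finset.sum_add_distrib, ← hsum]
      refine Finset.sum_congr rfl fun x _ => ?_
      rcases fin2 (x i) with h | h <;> simp [h]
    have := hm0 i
    linarith
  constructor
  · -- forward
    intro H i h
    set j : Fin k := ⟨(i : ℕ) + 1, h⟩ with hj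
    have hij : i ≠ j := by
      intro e
      have := congrArg Fin.val e
      simp [hj] at this
    have hIne : ({i, j} : Finset (Fin k)).Nonempty := ⟨i, by simp⟩
    obtain ⟨hz, ho⟩ := H.2.2 {i, j} hIne
    have hple : p i ≤ p j := hmono (by simp [hj, Fin.le_def])
    have hinf0 : ({i, j} : Finset (Fin k)).inf' hIne p = p i := by
      apply le_antisymm
      · exact Finset.inf'_le _ (by simp)
      · refine Finset.le_inf' _ _ fun b hb => ?_
        rcases Finset.mem_insert.1 hb with rfl | hb
        · exact le_refl _
        · rw [Finset.mem_singleton] at hb; subst hb; exact hple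
    have hinf1 : ({i, j} : Finset (Fin k)).inf' hIne (fun t => 1 - p t) = 1 - p j := by
      apply le_antisymm
      · exact Finset.inf'_le _ (by simp)
      · refine Finset.le_inf' _ _ fun b hb => ?_
        rcases Finset.mem_insert.1 hb with rfl | hb
        · linarith
        · rw [Finset.mem_singleton] at hb; subst hb; exact le_refl _
    have hsum2 : (∑ x : Fin k → Fin 2, if x i = x j then T x else 0)
        = prAll k T {i, j} 0 + prAll k T {i, j} 1 := by
      unfold prAll
      rw [← Finset.sum_add_distrib]
      refine Finset.sum_congr rfl fun x _ => ?_
      rcases fin2 (x i) with ha | ha <;> rcases fin2 (x j) with hb | hb <;>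
        simp [ha, hb]
    rw [hsum2, hz, ho, hinf0, hinf1, abs_of_nonneg (by linarith)]
    ring
  · -- backward
    intro hpair
    have stepA : ∀ (i : Fin k) (h : (i : ℕ) + 1 < k) (x : Fin k → Fin 2),
        T x ≠ 0 → x i = 0 → x ⟨(i : ℕ) + 1, h⟩ = 0 := by
      intro i h
      set j : Fin k := ⟨(i : ℕ) + 1, h⟩ with hj
      have hple : p i ≤ p j := hmono (by simp [hj, Fin.le_def])
      have e1 : (∑ x : Fin k → Fin 2, if x i = 0 ∧ x j = 0 then T x else 0)
          + (∑ x : Fin k → Fin 2, if x i = 0 ∧ x j = 1 then T x else 0) = p i := by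
        rw [← Finset.sum_add_distrib, ← hm0 i]
        refine Finset.sum_congr rfl fun x _ => ?_
        rcases fin2 (x i) with ha | ha <;> rcases fin2 (x j) with hb | hb <;> simp [ha, hb]
      have e2 : (∑ x : Fin k → Fin 2, if x i = 0 ∧ x j = 0 then T x else 0)
          + (∑ x : Fin k → Fin 2, if x i = 1 ∧ x j = 0 then T x else 0) = p j := by
        rw [← Finset.sum_add_distrib, ← hm0 j]
        refine Finset.sum_congr rfl fun x _ => ?_
        rcases fin2 (x i) with ha | ha <;> rcases fin2 (x j) with hb | hb <;> simp [ha, hb]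
      have e3 : (∑ x : Fin k → Fin 2, if x i = 0 ∧ x j = 0 then T x else 0)
          + ((∑ x : Fin k → Fin 2, if x i = 0 ∧ x j = 1 then T x else 0)
          + ((∑ x : Fin k → Fin 2, if x i = 1 ∧ x j = 0 then T x else 0)
          + (∑ x : Fin k → Fin 2, if x i = 1 ∧ x j = 1 then T x else 0))) = 1 := by
        rw [← Finset.sum_add_distrib, ← Finset.sum_add_distrib, ← Finset.sum_add_distrib,
          ← hsum]
        refine Finset.sum_congr rfl fun x _ => ?_
        rcases fin2 (x i) with ha | ha <;> rcases fin2 (x j) with hb | hb <;> simp [ha, hb]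
      have e4 : (∑ x : Fin k → Fin 2, if x i = 0 ∧ x j = 0 then T x else 0)
          + (∑ x : Fin k → Fin 2, if x i = 1 ∧ x j = 1 then T x else 0)
          = 1 - (p j - p i) := by
        have hp := hpair i h
        rw [abs_of_nonneg (by linarith)] at hp
        rw [← hj] at hp
        rw [← hp, ← Finset.sum_add_distrib]
        refine Finset.sum_congr rfl fun x _ => ?_
        rcases fin2 (x i) with ha | ha <;> rcases fin2 (x j) with hb | hb <;> simp [ha, hb]
      have hB0 : (∑ x : Fin k → Fin 2, if x i = 0 ∧ x j = 1 then T x else 0) = 0 := by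
        linarith
      intro x hx hxi
      rcases fin2 (x j) with hb | hb
      · exact hb
      · exfalso
        have hterm : ∀ y ∈ (Finset.univ : Finset (Fin k → Fin 2)),
            (0 : ℝ) ≤ if y i = 0 ∧ y j = 1 then T y else 0 := by
          intro y _
          split
          · exact hnn y
          · exact le_refl 0
        have := (Finset.sum_eq_zero_iff_of_nonneg hterm).1 hB0 x (Finset.mem_univ x)
        rw [if_pos ⟨hxi, hb⟩] at this
        exact hx this
    have propNat : ∀ x, T x ≠ 0 → ∀ (m n : ℕ) (hm : m < k) (hn : n < k),
        m ≤ n → x ⟨m, hm⟩ = 0 → x ⟨n, hn⟩ = 0 := by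
      intro x hx m n
      induction n with
      | zero =>
        intro hm hn hle hz
        have : m = 0 := Nat.le_zero.1 hle
        subst this
        exact hz
      | succ n ih =>
        intro hm hn hle hz
        by_cases hcase : m = n + 1
        · subst hcase
          exact hz
        · have hle' : m ≤ n := by omega
          have hnk : n < k := by omega
          have hzn := ih hm hnk hle' hz
          exact stepA ⟨n, hnk⟩ hn x hx hzn
    have prop : ∀ x, T x ≠ 0 → ∀ s t : Fin k, s ≤ t → x s = 0 → x t = 0 := by
      intro x hx s t hst hz
      exact propNat x hx s t s.isLt t.isLt hst hz
    refine ⟨hnn, hsum, fun I hI => ?_⟩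
    constructor
    · -- all zeros
      have key : prAll k T I 0 = p (I.min' hI) := by
        unfold prAll
        rw [← hm0 (I.min' hI)]
        refine Finset.sum_congr rfl fun x _ => ?_
        by_cases hx : T x = 0
        · split_ifs <;> simp [hx]
        · by_cases hc : x (I.min' hI) = 0
          · rw [if_pos hc, if_pos]
            intro t ht
            exact prop x hx (I.min' hI) t (I.min'_le t ht) hc
          · rw [if_neg hc, if_neg]
            intro hall
            exact hc (hall _ (I.min'_mem hI))
      have hinf : I.inf' hI p = p (I.min' hI) :=
        le_antisymm (Finset.inf'_le _ (I.min'_mem hI))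
          (Finset.le_inf' _ _ fun b hb => hmono (I.min'_le b hb))
      rw [key, hinf]
    · -- all ones
      have key : prAll k T I 1 = 1 - p (I.max' hI) := by
        unfold prAll
        rw [← hm1 (I.max' hI)]
        refine Finset.sum_congr rfl fun x _ => ?_
        by_cases hx : T x = 0
        · split_ifs <;> simp [hx]
        · by_cases hc : x (I.max' hI) = 1
          · rw [if_pos hc, if_pos]
            intro t ht
            rcases fin2 (x t) with hz | hz
            · exfalso
              have := prop x hx t (I.max' hI) (I.le_max' t ht) hz
              rw [hc] at this
              exact absurd this (by decide)
            · exact hz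
          · rw [if_neg hc, if_neg]
            intro hall
            exact hc (hall _ (I.max'_mem hI))
      have hinf : I.inf' hI (fun i => 1 - p i) = 1 - p (I.max' hI) := by
        apply le_antisymm
        · exact Finset.inf'_le _ (I.max'_mem hI)
        · refine Finset.le_inf' _ _ fun b hb => ?_
          have := hmono (I.le_max' b hb)
          linarith
      rw [key, hinf]
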